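/- Let p : H → G be a covering morphism of group-groupoids and let the associated action of G on H₀ be a·x = β(ã) (target of the unique lift ã of a at x). Then the map T_p : H → G ⋉ H₀ given by h ↦ (p(h), α(h)) is an isomorphism of group-groupoids over G, i.e., it is a bijective group-groupoid morphism with pr₁ ∘ T_p = p, with inverse (a,x) ↦ ã. -/

import Mathlib

/-- A groupoid, given algebraically: a set of objects `O` and a set of morphisms `M`
with source, target, identity-assigning, (totalized) composition and inversion maps.
`comp b a` is the composite `b ∘ a`, only constrained when `src b = tgt a`. -/
structure Gpd (O M : Type) where
  src : M → O
  tgt : M → O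
  idm : O → M
  comp : M → M → M
  inv : M → M
  src_idm : ∀ x, src (idm x) = x
  tgt_idm : ∀ x, tgt (idm x) = x
  src_comp : ∀ b a, src b = tgt a → src (comp b a) = src a
  tgt_comp : ∀ b a, src b = tgt a → tgt (comp b a) = tgt b
  comp_assoc : ∀ c b a, src c = tgt b → src b = tgt a →
    comp c (comp b a) = comp (comp c b) a
  comp_idm : ∀ a, comp a (idm (src a)) = a
  idm_comp : ∀ a, comp (idm (tgt a)) a = a
  src_inv : ∀ a, src (inv a) = tgt a
  tgt_inv : ∀ a, tgt (inv a) = src a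
  inv_comp : ∀ a, comp (inv a) a = idm (src a)
  comp_inv : ∀ a, comp a (inv a) = idm (tgt a)

/-- A group-groupoid (a group object in groupoids): the objects and morphisms are
groups (written additively, not necessarily commutative) and the structure maps
are group homomorphisms; the interchange law holds. -/
structure GroupGpd (O M : Type) [AddGroup O] [AddGroup M] extends Gpd O M where
  src_add : ∀ a b, src (a + b) = src a + src b
  tgt_add : ∀ a b, tgt (a + b) = tgt a + tgt b
  idm_add : ∀ x y, idm (x + y) = idm x + idm y
  interchange : ∀ a b c d, src b = tgt a → src d = tgt c →
    comp b a + comp d c = comp (b + d) (a + c)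

/-- A morphism of group-groupoids: a functor between the underlying groupoids that is
a group homomorphism on morphisms and on objects. -/
structure GGHom {O M O' M' : Type} [AddGroup O] [AddGroup M] [AddGroup O'] [AddGroup M']
    (S : GroupGpd O M) (T : GroupGpd O' M') where
  f : M → M'
  f0 : O → O'
  map_src : ∀ a, T.src (f a) = f0 (S.src a)
  map_tgt : ∀ a, T.tgt (f a) = f0 (S.tgt a)
  map_idm : ∀ x, f (S.idm x) = T.idm (f0 x)
  map_comp : ∀ b a, S.src b = S.tgt a → f (S.comp b a) = T.comp (f b) (f a)
  map_add : ∀ a b, f (a + b) = f a + f b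
  map_add0 : ∀ x y, f0 (x + y) = f0 x + f0 y

/-- `p : H → G` is a covering morphism if it restricts to a bijection on each star. -/
def GGHom.IsCovering {O M O' M' : Type} [AddGroup O] [AddGroup M] [AddGroup O'] [AddGroup M']
    {S : GroupGpd O M} {T : GroupGpd O' M'} (p : GGHom S T) : Prop :=
  ∀ x : O, Set.BijOn p.f {a | S.src a = x} {b | T.src b = p.f0 x}

/-- The morphism group of the action groupoid `G ⋉ M`: the subgroup
`{(a,x) : α(a) = w(x)}` of `G × M`. -/
def actionSub {O MG M : Type} [AddGroup O] [AddGroup MG] [AddGroup M]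
    (S : GroupGpd O MG) (w : M →+ O) : AddSubgroup (MG × M) where
  carrier := {q | S.src q.1 = w q.2}
  zero_mem' := by
    have h := S.src_add 0 0
    rw [add_zero] at h
    have h0 : S.src (0 : MG) = 0 := left_eq_add.mp h
    simp [h0]
  add_mem' := by
    intro a b ha hb
    simp only [Set.mem_setOf_eq] at *
    show S.src (a.1 + b.1) = w (a.2 + b.2)
    rw [S.src_add, ha, hb, map_add]
  neg_mem' := by
    intro a ha
    simp only [Set.mem_setOf_eq] at *
    have h : S.src (-a.1) + S.src a.1 = 0 := by
      rw [← S.src_add, neg_add_cancel]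
      have h2 := S.src_add 0 0
      rw [add_zero] at h2
      exact (left_eq_add.mp h2)
    have : S.src (-a.1) = -S.src a.1 := eq_neg_of_add_eq_zero_left h
    show S.src (-a.1) = w (-a.2)
    rw [this, ha, map_neg]

/-- Let `p : H → G` be a covering morphism of group-groupoids,
`ℓ a x` the unique lift of `a` at `x`, and `a · x := β(ℓ a x)` the induced action.
Then `T_p : H → G ⋉ H₀`, `h ↦ (p(h), α(h))`, is an isomorphism of group-groupoids
over `G`: it is bijective, additive, preserves source, target, identities and
composition, satisfies `pr₁ ∘ T_p = p`, and has inverse `(a,x) ↦ ℓ a x`. -/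
theorem stmt11 {OH MH OG MG : Type} [AddGroup OH] [AddGroup MH] [AddGroup OG] [AddGroup MG]
    {H : GroupGpd OH MH} {G : GroupGpd OG MG} (p : GGHom H G) (hp : p.IsCovering)
    (w : OH →+ OG) (hw0 : ⇑w = p.f0)
    (ℓ : MG → OH → MH)
    (hℓ : ∀ (a : MG) (x : OH), G.src a = p.f0 x → p.f (ℓ a x) = a ∧ H.src (ℓ a x) = x)
    (huniq : ∀ (a : MG) (x : OH) (m : MH), G.src a = p.f0 x →
      p.f m = a → H.src m = x → m = ℓ a x) :
    let act : MG → OH → OH := fun a x => H.tgt (ℓ a x)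
    let T : MH → ↥(actionSub G w) := fun h =>
      ⟨(p.f h, H.src h), (p.map_src h).trans (congrFun hw0 (H.src h)).symm⟩
    Function.Bijective T ∧
    (∀ h h' : MH, T (h + h') = T h + T h') ∧
    (∀ h : MH, (T h).1.1 = p.f h) ∧
    (∀ h : MH, (T h).1.2 = H.src h) ∧
    (∀ h : MH, act (p.f h) (H.src h) = H.tgt h) ∧
    (∀ x : OH, T (H.idm x) = ⟨(G.idm (w x), x), (G.src_idm (w x) : _)⟩) ∧
    (∀ b a : MH, ∀ hba : H.src b = H.tgt a,
      T (H.comp b a) =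
        ⟨(G.comp (p.f b) (p.f a), H.src a), by
          have hcb : G.src (p.f b) = G.tgt (p.f a) := by
            rw [p.map_src, p.map_tgt, hba]
          show G.src (G.comp (p.f b) (p.f a)) = w (H.src a)
          rw [G.src_comp _ _ hcb, p.map_src, hw0]⟩) ∧
    (∀ q : ↥(actionSub G w),
      T (ℓ q.1.1 q.1.2) = q) ∧
    (∀ h : MH, ℓ (p.f h) (H.src h) = h) := by

  intro act T
  have hret : ∀ h : MH, ℓ (p.f h) (H.src h) = h := by
    intro h
    exact (huniq _ _ h (p.map_src h) rfl rfl).symm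
  have hlift : ∀ q : ↥(actionSub G w), G.src q.1.1 = p.f0 q.1.2 := by
    intro q
    have := q.2
    simpa [actionSub, hw0] using this
  have hTℓ : ∀ q : ↥(actionSub G w), T (ℓ q.1.1 q.1.2) = q := by
    intro q
    obtain ⟨h1, h2⟩ := hℓ q.1.1 q.1.2 (hlift q)
    apply Subtype.ext
    exact Prod.ext h1 h2
  refine ⟨?_, ?_, fun h => rfl, fun h => rfl, ?_, ?_, ?_, hTℓ, hret⟩
  · constructor
    · intro h h' he
      have h1 : p.f h = p.f h' := congrArg (fun q => q.1.1) he
      have h2 : H.src h = H.src h' := congrArg (fun q => q.1.2) he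
      rw [← hret h, ← hret h', h1, h2]
    · intro q
      exact ⟨ℓ q.1.1 q.1.2, hTℓ q⟩
  · intro h h'
    apply Subtype.ext
    exact Prod.ext (p.map_add h h') (H.src_add h h')
  · intro h
    show H.tgt (ℓ (p.f h) (H.src h)) = H.tgt h
    rw [hret h]
  · intro x
    apply Subtype.ext
    refine Prod.ext ?_ (H.src_idm x)
    show p.f (H.idm x) = G.idm (w x)
    rw [p.map_idm, hw0]
  · intro b a hba
    apply Subtype.ext
    exact Prod.ext (p.map_comp b a hba) (H.src_comp b a hba)
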